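/- Let Z_1,...,Z_{n+1} be i.i.d. real-valued random variables with a continuous distribution, and let q̂ be the ⌈(1-ε)(n+1)⌉-th smallest among Z_1,...,Z_n (assume ⌈(1-ε)(n+1)⌉ ≤ n). Then P(Z_{n+1} ≤ q̂) ≤ 1 - ε + 1/(n+1). -/

import Mathlib

open MeasureTheory ProbabilityTheory Finset
open scoped ENNReal

section Aux

/-- countP of a list built from a function equals a sum of indicators. -/
lemma countP_ofFn' {α : Type*} {m : ℕ} (f : Fin m → α) (p : α → Bool) :
    (List.ofFn f).countP p = ∑ i : Fin m, if p (f i) then 1 else 0 := by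
  induction m with
  | zero => simp
  | succ m ih =>
      rw [List.ofFn_succ, List.countP_cons, Fin.sum_univ_succ, ih]
      ring

/-- In a sorted list, the number of elements strictly below `c` is at most `m`
provided `c ≤ S[m]`. -/
lemma countP_lt_le_of_sorted (S : List ℝ) (hS : S.Pairwise (· ≤ ·)) (m : ℕ) (hm : m < S.length)
    (c : ℝ) (hc : c ≤ S[m]) : S.countP (fun a => decide (a < c)) ≤ m := by
  have hsplit : S.countP (fun a => decide (a < c)) =
      (S.take m).countP (fun a => decide (a < c)) +
        (S.drop m).countP (fun a => decide (a < c)) := by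
    rw [← List.countP_append, List.take_append_drop]
  have hdrop : (S.drop m).countP (fun a => decide (a < c)) = 0 := by
    rw [List.countP_eq_zero]
    intro a ha
    simp only [decide_eq_true_eq, not_lt]
    obtain ⟨⟨j, hj⟩, rfl⟩ := List.mem_iff_get.mp ha
    have hlen : m + j < S.length := by
      have := hj; rw [List.length_drop] at this; omega
    have hget : (S.drop m).get ⟨j, hj⟩ = S[m + j] := by
      simp [List.get_eq_getElem, List.getElem_drop]
    rw [hget]
    rcases Nat.eq_zero_or_pos j with h0 | h0
    · subst h0; simpa using hc
    · have hmono : S[m] ≤ S[m + j] := by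
        have := List.pairwise_iff_get.mp hS ⟨m, hm⟩ ⟨m + j, hlen⟩
          (by simp [Fin.lt_def]; omega)
        simpa using this
      exact hc.trans hmono
  have htake : (S.take m).countP (fun a => decide (a < c)) ≤ m := by
    calc (S.take m).countP (fun a => decide (a < c)) ≤ (S.take m).length :=
          List.countP_le_length
      _ ≤ m := by simp [List.length_take]
  omega

/-- The key deterministic lemma: if the last value is at most the `k`-th order statistic
of the first `n` values, and all values are distinct, then at most `k` of the `n+1`
values are `≤` the last value. -/
lemma rank_le_of_le_orderstat {n : ℕ} (x : Fin (n + 1) → ℝ) (hx : Function.Injective x)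
    (k : ℕ) (hk1 : 1 ≤ k) (hkn : k ≤ n)
    (h : x (Fin.last n) ≤
      ((List.ofFn fun i : Fin n => x i.castSucc).mergeSort (· ≤ ·)).getD (k - 1) 0) :
    (Finset.univ.filter fun i : Fin (n + 1) => x i ≤ x (Fin.last n)).card ≤ k := by
  set c := x (Fin.last n) with hc
  set L := List.ofFn fun i : Fin n => x i.castSucc with hL
  set S := L.mergeSort (· ≤ ·) with hSdef
  have hlenS : S.length = n := by
    simp [hSdef, hL, List.length_mergeSort]
  have hidx : k - 1 < S.length := by omega
  have hsorted : S.Pairwise (· ≤ ·) := List.pairwise_mergeSort' (· ≤ ·) L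
  have hcS : c ≤ S[k - 1] := by
    rw [List.getD_eq_getElem S 0 hidx] at h
    exact h
  have hScount : S.countP (fun a => decide (a < c)) ≤ k - 1 :=
    countP_lt_le_of_sorted S hsorted (k - 1) hidx c hcS
  have hLcount : L.countP (fun a => decide (a < c)) ≤ k - 1 := by
    rwa [(List.mergeSort_perm L _).countP_eq] at hScount
  have hLsum : (∑ i : Fin n, if x i.castSucc < c then 1 else 0) ≤ k - 1 := by
    have := countP_ofFn' (fun i : Fin n => x i.castSucc) (fun a => decide (a < c))
    simp only [decide_eq_true_eq] at this
    rw [← hL] at this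
    omega
  rw [Finset.card_filter]
  rw [Fin.sum_univ_castSucc]
  have hlast : (if x (Fin.last n) ≤ c then 1 else 0) = 1 := by simp [hc]
  have hterm : ∀ i : Fin n,
      (if x i.castSucc ≤ c then 1 else 0) ≤ (if x i.castSucc < c then 1 else 0) := by
    intro i
    by_cases hle : x i.castSucc ≤ c
    · have hne : x i.castSucc ≠ c := by
        intro he
        exact absurd (hx he) (Fin.castSucc_lt_last i).ne
      simp [hle, lt_of_le_of_ne hle hne]
    · simp [hle]
  calc (∑ i : Fin n, if x i.castSucc ≤ c then 1 else 0) +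
        (if x (Fin.last n) ≤ c then 1 else 0)
      ≤ (∑ i : Fin n, if x i.castSucc < c then 1 else 0) + 1 := by
        gcongr with i
        · exact hterm i
        · omega
    _ ≤ (k - 1) + 1 := by omega
    _ = k := by omega

/-- The set of points with given rank of coordinate `i`. -/
def rkSet (n : ℕ) (i : Fin (n + 1)) (j : ℕ) : Set (Fin (n + 1) → ℝ) :=
  {x | (Finset.univ.filter fun i' => x i' ≤ x i).card = j}

lemma measurable_rk {n : ℕ} (i : Fin (n + 1)) :
    Measurable fun x : Fin (n + 1) → ℝ =>
      (Finset.univ.filter fun i' => x i' ≤ x i).card := by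
  have : (fun x : Fin (n + 1) → ℝ =>
      (Finset.univ.filter fun i' => x i' ≤ x i).card) =
      fun x => ∑ i' : Fin (n + 1), if x i' ≤ x i then 1 else 0 := by
    funext x; rw [Finset.card_filter]
  rw [this]
  exact Finset.measurable_sum _ fun i' _ =>
    Measurable.ite (measurableSet_le (measurable_pi_apply i') (measurable_pi_apply i))
      measurable_const measurable_const

lemma measurableSet_rkSet {n : ℕ} (i : Fin (n + 1)) (j : ℕ) :
    MeasurableSet (rkSet n i j) :=
  measurable_rk i (measurableSet_singleton j)

lemma measurableSet_inj {n : ℕ} :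
    MeasurableSet {x : Fin (n + 1) → ℝ | Function.Injective x} := by
  have : {x : Fin (n + 1) → ℝ | Function.Injective x} =
      ⋂ (i : Fin (n + 1)) (i' : Fin (n + 1)) (_ : i ≠ i'), {x | x i ≠ x i'} := by
    ext x
    simp only [Set.mem_setOf_eq, Set.mem_iInter]
    constructor
    · intro hx i i' hne
      exact fun he => hne (hx he)
    · intro hx a b hab
      by_contra hne
      exact hx a b hne hab
  rw [this]
  exact MeasurableSet.iInter fun i => MeasurableSet.iInter fun i' =>
    MeasurableSet.iInter fun _ =>
      (measurableSet_eq_fun (measurable_pi_apply i) (measurable_pi_apply i')).compl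

/-- On injective vectors, the rank map is injective. -/
lemma rk_injective {n : ℕ} {x : Fin (n + 1) → ℝ} (hx : Function.Injective x) :
    Function.Injective fun i =>
      (Finset.univ.filter fun i' => x i' ≤ x i).card := by
  have key : ∀ a b : Fin (n + 1), x a < x b →
      (Finset.univ.filter fun i' => x i' ≤ x a).card =
        (Finset.univ.filter fun i' => x i' ≤ x b).card → False := by
    intro a b hlt hab
    have hsub : (Finset.univ.filter fun i' => x i' ≤ x a) ⊆
        (Finset.univ.filter fun i' => x i' ≤ x b) := by
      intro i' hi'
      simp only [Finset.mem_filter, Finset.mem_univ, true_and] at hi' ⊢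
      exact hi'.trans hlt.le
    have heq : (Finset.univ.filter fun i' => x i' ≤ x a) =
        (Finset.univ.filter fun i' => x i' ≤ x b) :=
      Finset.eq_of_subset_of_card_le hsub (le_of_eq hab.symm)
    have hbmem : b ∈ (Finset.univ.filter fun i' => x i' ≤ x b) := by
      simp
    rw [← heq] at hbmem
    simp only [Finset.mem_filter, Finset.mem_univ, true_and] at hbmem
    exact absurd (lt_of_le_of_lt hbmem hlt) (lt_irrefl _)
  intro a b hab
  simp only at hab
  rcases lt_trichotomy (x a) (x b) with h | h | h
  · exact (key a b h hab).elim
  · exact hx h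
  · exact (key b a h hab.symm).elim

end Aux

section MeasureAux

variable {n : ℕ} (μ : Measure ℝ) [IsProbabilityMeasure μ]

/-- The set of non-injective vectors is null for the product of atomless measures. -/
lemma pi_noninj_null [NullSingletonClass μ] :
    (Measure.pi fun _ : Fin (n + 1) => μ) {x | ¬ Function.Injective x} = 0 := by
  set π := Measure.pi fun _ : Fin (n + 1) => μ with hπ
  have hpair : ∀ i i' : Fin (n + 1), i ≠ i' → π {x | x i = x i'} = 0 := by
    intro i i' hne
    have hT : Measurable fun x : Fin (n + 1) → ℝ => (x i, x i') :=
      (measurable_pi_apply i).prodMk (measurable_pi_apply i')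
    have hmap : Measure.map (fun x : Fin (n + 1) → ℝ => (x i, x i')) π = μ.prod μ := by
      refine (Measure.prod_eq fun s t hs ht => ?_).symm
      rw [Measure.map_apply hT (hs.prod ht)]
      have hpre : (fun x : Fin (n + 1) → ℝ => (x i, x i')) ⁻¹' (s ×ˢ t) =
          Set.pi Set.univ (fun j => if j = i then s else if j = i' then t else Set.univ) := by
        ext x
        simp only [Set.mem_preimage, Set.mem_prod, Set.mem_pi, Set.mem_univ, true_implies]
        constructor
        · rintro ⟨h1, h2⟩ j
          by_cases hj : j = i
          · subst hj; simpa using h1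
          · by_cases hj' : j = i'
            · subst hj'; simp [hj, h2]
            · simp [hj, hj']
        · intro h
          refine ⟨?_, ?_⟩
          · have := h i; simpa using this
          · have := h i'; simpa [hne.symm] using this
      rw [hpre, Measure.pi_pi]
      have hval : ∀ j : Fin (n + 1),
          μ (if j = i then s else if j = i' then t else Set.univ) =
            if j = i then μ s else if j = i' then μ t else 1 := by
        intro j
        by_cases hj : j = i
        · simp [hj]
        · by_cases hj' : j = i'
          · simp [hj, hj', Ne.symm hne]
          · simp [hj, hj']
      simp_rw [hval]
      rw [← Finset.prod_subset (Finset.subset_univ ({i, i'} : Finset (Fin (n + 1))))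
        (fun j _ hj => by
          simp only [Finset.mem_insert, Finset.mem_singleton, not_or] at hj
          simp [hj.1, hj.2])]
      rw [Finset.prod_pair hne]
      simp [hne.symm]
    have hdiag : MeasurableSet {p : ℝ × ℝ | p.1 = p.2} :=
      measurableSet_eq_fun measurable_fst measurable_snd
    have : π {x | x i = x i'} =
        (μ.prod μ) {p : ℝ × ℝ | p.1 = p.2} := by
      rw [← hmap, Measure.map_apply hT hdiag]
      rfl
    rw [this, Measure.prod_apply hdiag]
    have : ∀ a : ℝ, μ (Prod.mk a ⁻¹' {p : ℝ × ℝ | p.1 = p.2}) = 0 := by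
      intro a
      have : Prod.mk a ⁻¹' {p : ℝ × ℝ | p.1 = p.2} = {a} := by
        ext b; simp [eq_comm]
      rw [this]
      exact measure_singleton a
    simp [this]
  have hsub : {x : Fin (n + 1) → ℝ | ¬ Function.Injective x} ⊆
      ⋃ (i : Fin (n + 1)) (i' : Fin (n + 1)) (_ : i ≠ i'), {x | x i = x i'} := by
    intro x hx
    simp only [Set.mem_setOf_eq, Function.Injective, not_forall] at hx
    obtain ⟨a, b, hab, hne⟩ := hx
    exact Set.mem_iUnion.mpr ⟨a, Set.mem_iUnion.mpr ⟨b, Set.mem_iUnion.mpr ⟨hne, hab⟩⟩⟩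
  refine measure_mono_null hsub ?_
  refine measure_iUnion_null fun i => measure_iUnion_null fun i' => measure_iUnion_null fun hne =>
    hpair i i' hne

/-- By symmetry of the product measure, ranks of different coordinates are equidistributed. -/
lemma pi_rkSet_eq (i : Fin (n + 1)) (j : ℕ) :
    (Measure.pi fun _ : Fin (n + 1) => μ) (rkSet n i j) =
      (Measure.pi fun _ : Fin (n + 1) => μ) (rkSet n (Fin.last n) j) := by
  set e : Fin (n + 1) ≃ Fin (n + 1) := Equiv.swap i (Fin.last n) with he
  have hmp := measurePreserving_piCongrLeft (fun _ : Fin (n + 1) => μ) e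
  have hpre := hmp.measure_preimage (μa := Measure.pi fun _ => μ)
    (s := rkSet n (Fin.last n) j) (measurableSet_rkSet _ _).nullMeasurableSet
  have happ : ∀ (x : Fin (n + 1) → ℝ) (i' : Fin (n + 1)),
      (MeasurableEquiv.piCongrLeft (fun _ => ℝ) e) x i' = x (e.symm i') := by
    intro x i'
    have := MeasurableEquiv.piCongrLeft_apply_apply (β := fun _ : Fin (n+1) => ℝ) e x (e.symm i')
    simpa using this
  have hpreimage : (MeasurableEquiv.piCongrLeft (fun _ => ℝ) e) ⁻¹' rkSet n (Fin.last n) j =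
      rkSet n i j := by
    ext x
    simp only [Set.mem_preimage, rkSet, Set.mem_setOf_eq]
    have hlastval : (MeasurableEquiv.piCongrLeft (fun _ => ℝ) e) x (Fin.last n) = x i := by
      rw [happ]
      congr 1
      simp [he, Equiv.symm_swap, Equiv.swap_apply_right]
    have hcard : (Finset.univ.filter fun i' =>
        (MeasurableEquiv.piCongrLeft (fun _ => ℝ) e) x i' ≤
          (MeasurableEquiv.piCongrLeft (fun _ => ℝ) e) x (Fin.last n)).card =
        (Finset.univ.filter fun i' => x i' ≤ x i).card := by
      rw [hlastval]
      rw [Finset.card_filter, Finset.card_filter]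
      refine Fintype.sum_equiv e.symm _ _ fun i' => ?_
      rw [happ]
    rw [hcard]
  rw [hpreimage] at hpre
  exact hpre

lemma pi_rkSet_le [NullSingletonClass μ] (j : ℕ) :
    (Measure.pi fun _ : Fin (n + 1) => μ) (rkSet n (Fin.last n) j) ≤
      (((n : ℝ≥0∞) + 1))⁻¹ := by
  set π := Measure.pi fun _ : Fin (n + 1) => μ with hπ
  haveI : IsProbabilityMeasure π := by rw [hπ]; infer_instance
  set I := {x : Fin (n + 1) → ℝ | Function.Injective x} with hI
  set A : Fin (n + 1) → Set (Fin (n + 1) → ℝ) := fun i => rkSet n i j ∩ I with hA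
  have hAmeas : ∀ i, MeasurableSet (A i) := fun i =>
    (measurableSet_rkSet i j).inter measurableSet_inj
  have hdisj : Pairwise (Function.onFun Disjoint A) := by
    intro a b hne
    refine Set.disjoint_left.mpr fun x hxa hxb => ?_
    have hinj : Function.Injective x := hxa.2
    have h1 : (Finset.univ.filter fun i' => x i' ≤ x a).card = j := hxa.1
    have h2 : (Finset.univ.filter fun i' => x i' ≤ x b).card = j := hxb.1
    exact hne (rk_injective hinj (h1.trans h2.symm))
  have hsum : ∑ i : Fin (n + 1), π (A i) ≤ 1 := by
    rw [← tsum_fintype (L := SummationFilter.unconditional _), ← measure_iUnion hdisj hAmeas]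
    exact prob_le_one
  have hAi : ∀ i : Fin (n + 1), π (rkSet n (Fin.last n) j) ≤ π (A i) := by
    intro i
    have he : π (rkSet n (Fin.last n) j) = π (rkSet n i j) := by
      rw [hπ]; exact (pi_rkSet_eq μ i j).symm
    rw [he]
    calc π (rkSet n i j) ≤ π (A i ∪ {x | ¬ Function.Injective x}) := by
          refine measure_mono fun x hx => ?_
          by_cases hinj : Function.Injective x
          · exact Or.inl ⟨hx, hinj⟩
          · exact Or.inr hinj
      _ ≤ π (A i) + π {x | ¬ Function.Injective x} := measure_union_le _ _
      _ = π (A i) := by rw [hπ, pi_noninj_null μ, add_zero]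
  have hmain : ((n : ℝ≥0∞) + 1) * π (rkSet n (Fin.last n) j) ≤ 1 := by
    calc ((n : ℝ≥0∞) + 1) * π (rkSet n (Fin.last n) j)
        = ∑ _i : Fin (n + 1), π (rkSet n (Fin.last n) j) := by
          rw [Finset.sum_const, Finset.card_univ, Fintype.card_fin, nsmul_eq_mul]
          push_cast
          ring
      _ ≤ ∑ i : Fin (n + 1), π (A i) := Finset.sum_le_sum fun i _ => hAi i
      _ ≤ 1 := hsum
  rw [mul_comm] at hmain
  exact ENNReal.le_inv_iff_mul_le.mpr hmain

end MeasureAux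

section Main

lemma map_joint_eq_pi {Ω : Type*} [MeasurableSpace Ω] (P : Measure Ω) [IsProbabilityMeasure P]
    (n : ℕ) (Z : Fin (n + 1) → Ω → ℝ) (hmeas : ∀ i, Measurable (Z i))
    (hindep : iIndepFun Z P)
    (hident : ∀ i j, Measure.map (Z i) P = Measure.map (Z j) P) :
    Measure.map (fun ω (i : Fin (n + 1)) => Z i ω) P =
      Measure.pi fun _ => Measure.map (Z (Fin.last n)) P := by
  refine (Measure.pi_eq fun s hs => ?_).symm
  rw [Measure.map_apply (measurable_pi_lambda _ hmeas) (MeasurableSet.univ_pi hs)]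
  have hpre : (fun ω (i : Fin (n + 1)) => Z i ω) ⁻¹' Set.pi Set.univ s = ⋂ i, Z i ⁻¹' s i := by
    ext ω; simp [Set.mem_pi]
  rw [hpre, hindep.meas_iInter fun i => ⟨s i, hs i, rfl⟩]
  refine Finset.prod_congr rfl fun i _ => ?_
  rw [← Measure.map_apply (hmeas i) (hs i), hident i (Fin.last n)]

/-- Upper bound of split conformal coverage for i.i.d. draws from a continuous
(atomless) distribution. -/
theorem split_conformal_coverage_upper
    {Ω : Type*} [MeasurableSpace Ω] (P : Measure Ω) [IsProbabilityMeasure P]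
    (n : ℕ) (Z : Fin (n + 1) → Ω → ℝ) (hmeas : ∀ i, Measurable (Z i))
    (hindep : iIndepFun Z P)
    (hident : ∀ i j, Measure.map (Z i) P = Measure.map (Z j) P)
    (hcont : ∀ i, NoAtoms (Measure.map (Z i) P))
    (ε : ℝ) (hε0 : 0 < ε) (hε1 : ε < 1)
    (hk : ⌈(1 - ε) * (n + 1)⌉₊ ≤ n) :
    P {ω | Z (Fin.last n) ω ≤
        ((List.ofFn (fun i : Fin n => Z i.castSucc ω)).mergeSort (· ≤ ·)).getD
          (⌈(1 - ε) * (n + 1)⌉₊ - 1) 0}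
      ≤ ENNReal.ofReal (1 - ε + 1 / (n + 1)) := by
  classical
  set k := ⌈(1 - ε) * ((n : ℝ) + 1)⌉₊ with hkdef
  have hnpos : (0 : ℝ) < (n : ℝ) + 1 := by positivity
  have hk1 : 1 ≤ k := by
    rw [hkdef]
    exact Nat.ceil_pos.mpr (mul_pos (by linarith) hnpos)
  set μ := Measure.map (Z (Fin.last n)) P with hμ
  haveI : IsProbabilityMeasure μ := Measure.isProbabilityMeasure_map (hmeas _).aemeasurable
  haveI : NullSingletonClass μ := hcont _
  set J : Ω → (Fin (n + 1) → ℝ) := fun ω i => Z i ω with hJ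
  have hJmeas : Measurable J := measurable_pi_lambda _ hmeas
  set B : Set (Fin (n + 1) → ℝ) :=
    {x | ¬ Function.Injective x} ∪ ⋃ j ∈ Finset.Icc 1 k, rkSet n (Fin.last n) j with hB
  have hBmeas : MeasurableSet B := by
    refine MeasurableSet.union measurableSet_inj.compl ?_
    exact MeasurableSet.biUnion (Finset.Icc 1 k).countable_toSet
      fun j _ => measurableSet_rkSet _ _
  have hsub : {ω | Z (Fin.last n) ω ≤
        ((List.ofFn (fun i : Fin n => Z i.castSucc ω)).mergeSort (· ≤ ·)).getD (k - 1) 0}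
      ⊆ J ⁻¹' B := by
    intro ω hω
    by_cases hinj : Function.Injective (J ω)
    · have hr : (Finset.univ.filter fun i : Fin (n + 1) =>
          J ω i ≤ J ω (Fin.last n)).card ≤ k :=
        rank_le_of_le_orderstat (J ω) hinj k hk1 hk hω
      have hr1 : 1 ≤ (Finset.univ.filter fun i : Fin (n + 1) =>
          J ω i ≤ J ω (Fin.last n)).card :=
        Finset.card_pos.mpr ⟨Fin.last n, by simp⟩
      exact Or.inr (Set.mem_iUnion₂.mpr ⟨_, Finset.mem_Icc.mpr ⟨hr1, hr⟩, rfl⟩)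
    · exact Or.inl hinj
  have hmapB : P (J ⁻¹' B) = (Measure.pi fun _ : Fin (n + 1) => μ) B := by
    rw [hμ, ← map_joint_eq_pi P n Z hmeas hindep hident,
      Measure.map_apply hJmeas hBmeas]
  have hkreal : (k : ℝ) < (1 - ε) * ((n : ℝ) + 1) + 1 := by
    rw [hkdef]
    exact Nat.ceil_lt_add_one (mul_nonneg (by linarith) hnpos.le)
  calc P {ω | Z (Fin.last n) ω ≤
        ((List.ofFn (fun i : Fin n => Z i.castSucc ω)).mergeSort (· ≤ ·)).getD (k - 1) 0}
      ≤ P (J ⁻¹' B) := measure_mono hsub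
    _ = (Measure.pi fun _ : Fin (n + 1) => μ) B := hmapB
    _ ≤ (Measure.pi fun _ : Fin (n + 1) => μ) {x | ¬ Function.Injective x} +
        (Measure.pi fun _ : Fin (n + 1) => μ)
          (⋃ j ∈ Finset.Icc 1 k, rkSet n (Fin.last n) j) := measure_union_le _ _
    _ = (Measure.pi fun _ : Fin (n + 1) => μ)
          (⋃ j ∈ Finset.Icc 1 k, rkSet n (Fin.last n) j) := by
        rw [pi_noninj_null μ, zero_add]
    _ ≤ ∑ j ∈ Finset.Icc 1 k,
          (Measure.pi fun _ : Fin (n + 1) => μ) (rkSet n (Fin.last n) j) :=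
        measure_biUnion_finset_le _ _
    _ ≤ ∑ _j ∈ Finset.Icc 1 k, ((n : ℝ≥0∞) + 1)⁻¹ :=
        Finset.sum_le_sum fun j _ => pi_rkSet_le μ j
    _ = (k : ℝ≥0∞) * ((n : ℝ≥0∞) + 1)⁻¹ := by
        rw [Finset.sum_const, Nat.card_Icc, nsmul_eq_mul]
        norm_num
    _ ≤ ENNReal.ofReal (1 - ε + 1 / (n + 1)) := by
        have hn1 : ((n : ℝ≥0∞) + 1) = ENNReal.ofReal ((n : ℝ) + 1) := by
          rw [ENNReal.ofReal_add (by positivity) zero_le_one, ENNReal.ofReal_natCast,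
            ENNReal.ofReal_one]
        rw [hn1, ← ENNReal.ofReal_inv_of_pos hnpos, ← ENNReal.ofReal_natCast k,
          ← ENNReal.ofReal_mul (by positivity)]
        refine ENNReal.ofReal_le_ofReal ?_
        rw [← div_eq_mul_inv, div_le_iff₀ hnpos]
        have : (1 - ε + 1 / ((n : ℝ) + 1)) * ((n : ℝ) + 1) = (1 - ε) * ((n : ℝ) + 1) + 1 := by
          field_simp
        rw [this]
        linarith

end Main
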